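/- Any solution on the unstable slow manifold of ẋ = y, ẏ = -μ(t)x, ṫ = ε (with μ < 0 on I₋) through a point (x₀, h_u(t₀,ε)x₀, t₀) satisfies x(t) = (μ(t₀)/μ(t))^{1/4} exp(ε⁻¹ ∫_{t₀}^t √(-μ(s)) ds) (1 + O(ε)) x₀ for t ∈ I₋. -/

import Mathlib

set_option maxHeartbeats 1600000 in
/-- Any solution on the unstable slow manifold
`y = h_u(t,ε) x` (with `h_u(t,ε) = √(-μ(t)) - (1/4) μ(t)⁻¹ μ'(t) ε + ε² U₂(t,ε)`,
`U₂` bounded), i.e. any solution of `dx/dt = ε⁻¹ h_u(t,ε) x`, through a point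
`(x₀, h_u(t₀,ε) x₀, t₀)` satisfies
`x(t) = (μ(t₀)/μ(t))^{1/4} exp(ε⁻¹ ∫_{t₀}^t √(-μ(s)) ds) (1 + O(ε)) x₀` on `I₋ = [a,b]`. -/
theorem stmt_3 (a b : ℝ) (hab : a < b) (μ : ℝ → ℝ) (hμ : ContDiff ℝ 2 μ)
    (c : ℝ) (hc : 0 < c) (hneg : ∀ t ∈ Set.Icc a b, μ t ≤ -c)
    (U₂ : ℝ → ℝ → ℝ) (M : ℝ) (hM : 0 ≤ M)
    (hU₂ : ∀ ε > (0:ℝ), ∀ t ∈ Set.Icc a b, |U₂ t ε| ≤ M) :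
    ∃ C > 0, ∃ ε₀ > 0, ∀ ε ∈ Set.Ioc (0:ℝ) ε₀,
      ∀ x : ℝ → ℝ, ∀ t₀ ∈ Set.Icc a b,
        (∀ t ∈ Set.Icc a b,
          HasDerivAt x (ε⁻¹ * (Real.sqrt (-μ t) - (1/4) * (μ t)⁻¹ * deriv μ t * ε
            + ε ^ 2 * U₂ t ε) * x t) t) →
        ∀ t ∈ Set.Icc a b, ∃ R : ℝ, |R| ≤ C * ε ∧
          x t = (μ t₀ / μ t) ^ ((1:ℝ)/4)
            * Real.exp (ε⁻¹ * ∫ s in t₀..t, Real.sqrt (-μ s)) * (1 + R) * x t₀ := by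
  have hba : (0:ℝ) ≤ b - a := by linarith
  refine ⟨M * (b - a) * Real.exp (M * (b - a)) + 1, by positivity, 1, one_pos, ?_⟩
  rintro ε ⟨hε0, hε1⟩ x t₀ ht₀ hx t ht
  have hμd : Differentiable ℝ μ := hμ.differentiable (by norm_num)
  have hsq : Continuous fun s : ℝ => Real.sqrt (-μ s) :=
    Real.continuous_sqrt.comp hμd.continuous.neg
  -- basic negativity facts
  have hμne : ∀ s ∈ Set.Icc a b, μ s ≠ 0 := fun s hs =>
    ne_of_lt (lt_of_le_of_lt (hneg s hs) (by linarith))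
  have hμneg : ∀ s ∈ Set.Icc a b, 0 < -μ s := fun s hs => by
    have := hneg s hs; linarith
  -- the phase function
  set ψ : ℝ → ℝ := fun s =>
    (1/4) * (Real.log (-μ t₀) - Real.log (-μ s))
      + ε⁻¹ * ∫ u in t₀..s, Real.sqrt (-μ u) with hψ
  set g : ℝ → ℝ := fun s => x s * Real.exp (-ψ s) with hg
  clear_value ψ g
  have hFd : ∀ s, HasDerivAt (fun r => ∫ u in t₀..r, Real.sqrt (-μ u))
      (Real.sqrt (-μ s)) s := fun s =>
    intervalIntegral.integral_hasDerivAt_right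
      (hsq.intervalIntegrable _ _)
      (hsq.stronglyMeasurableAtFilter _ _)
      hsq.continuousAt
  have hψd : ∀ s ∈ Set.Icc a b, HasDerivAt ψ
      (-(1/4) * (deriv μ s / μ s) + ε⁻¹ * Real.sqrt (-μ s)) s := by
    intro s hs
    have h1 : HasDerivAt (fun r => Real.log (-μ r)) (-deriv μ s / -μ s) s :=
      ((hμd s).hasDerivAt.neg).log (by have := hμneg s hs; simp only [Pi.neg_apply]; linarith)
    have h2 : HasDerivAt (fun r => (1:ℝ)/4 * (Real.log (-μ t₀) - Real.log (-μ r))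
        + ε⁻¹ * ∫ u in t₀..r, Real.sqrt (-μ u)) _ s :=
      (((hasDerivAt_const s (Real.log (-μ t₀))).sub h1).const_mul
      ((1:ℝ)/4)).add ((hFd s).const_mul ε⁻¹)
    convert h2 using 1
    ring
  -- derivative of g
  have hgd : ∀ s ∈ Set.Icc a b, HasDerivAt g (ε * U₂ s ε * g s) s := by
    intro s hs
    have h1 := hx s hs
    have h2 := ((hψd s hs).neg).exp
    have h3 : HasDerivAt (fun s => x s * Real.exp (-ψ s)) _ s := h1.mul h2
    convert h3 using 1
    rw [hg]
    simp only [Pi.neg_apply]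
    have hεne : ε ≠ 0 := ne_of_gt hε0
    have hμsne : μ s ≠ 0 := hμne s hs
    field_simp
    ring
  -- g is continuous on [a,b]
  have hgc : ContinuousOn g (Set.Icc a b) := fun s hs =>
    ((hgd s hs).continuousAt).continuousWithinAt
  -- monotonicity helpers
  have key : ∀ s ∈ Set.Icc a b, g s ^ 2 ≤ Real.exp (2 * (ε * M) * (b - a)) * g t₀ ^ 2 := by
    have hK : 0 ≤ ε * M := by positivity
    -- p increasing, q decreasing
    have hpmono : MonotoneOn (fun s => Real.exp (2 * (ε * M) * s) * g s ^ 2) (Set.Icc a b) := by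
      apply monotoneOn_of_deriv_nonneg (convex_Icc a b)
      · exact (Real.continuous_exp.comp (by continuity)).continuousOn.mul (hgc.pow 2)
      · intro s hs
        rw [interior_Icc] at hs
        have hs' : s ∈ Set.Icc a b := Set.mem_Icc_of_Ioo hs
        exact (((Real.hasDerivAt_exp _).comp s
          ((hasDerivAt_id s).const_mul (2 * (ε * M)))).mul
          ((hgd s hs').pow 2)).differentiableAt.differentiableWithinAt
      · intro s hs
        rw [interior_Icc] at hs
        have hs' : s ∈ Set.Icc a b := Set.mem_Icc_of_Ioo hs
        have he : HasDerivAt (fun y : ℝ => Real.exp (2 * (ε * M) * y))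
            (2 * (ε * M) * Real.exp (2 * (ε * M) * s)) s := by
          have h0 : HasDerivAt (fun y : ℝ => 2 * (ε * M) * y) (2 * (ε * M)) s := by
            simpa using (hasDerivAt_id s).const_mul (2 * (ε * M))
          simpa [mul_comm] using h0.exp
        have hd : HasDerivAt (fun s => Real.exp (2 * (ε * M) * s) * g s ^ 2)
            (2 * (ε * M) * Real.exp (2 * (ε * M) * s) * g s ^ 2
              + Real.exp (2 * (ε * M) * s) * (2 * g s * (ε * U₂ s ε * g s))) s := by
          have h : HasDerivAt (fun s => Real.exp (2 * (ε * M) * s) * g s ^ 2) _ s :=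
            he.mul ((hgd s hs').pow 2)
          convert h using 1
          push_cast
          ring
        rw [hd.deriv]
        have hU := hU₂ ε hε0 s hs'
        have h1 : -M ≤ U₂ s ε := (abs_le.mp hU).1
        nlinarith [mul_nonneg (mul_nonneg (mul_nonneg
          (by positivity : (0:ℝ) ≤ 2 * ε) (Real.exp_pos (2 * (ε * M) * s)).le)
          (sq_nonneg (g s))) (by linarith : (0:ℝ) ≤ M + U₂ s ε)]
    have hqanti : AntitoneOn (fun s => Real.exp (-(2 * (ε * M)) * s) * g s ^ 2) (Set.Icc a b) := by
      apply antitoneOn_of_deriv_nonpos (convex_Icc a b)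
      · exact (Real.continuous_exp.comp (by continuity)).continuousOn.mul (hgc.pow 2)
      · intro s hs
        rw [interior_Icc] at hs
        have hs' : s ∈ Set.Icc a b := Set.mem_Icc_of_Ioo hs
        exact (((Real.hasDerivAt_exp _).comp s
          ((hasDerivAt_id s).const_mul (-(2 * (ε * M))))).mul
          ((hgd s hs').pow 2)).differentiableAt.differentiableWithinAt
      · intro s hs
        rw [interior_Icc] at hs
        have hs' : s ∈ Set.Icc a b := Set.mem_Icc_of_Ioo hs
        have he : HasDerivAt (fun y : ℝ => Real.exp (-(2 * (ε * M)) * y))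
            (-(2 * (ε * M)) * Real.exp (-(2 * (ε * M)) * s)) s := by
          have h0 : HasDerivAt (fun y : ℝ => -(2 * (ε * M)) * y) (-(2 * (ε * M))) s := by
            simpa using (hasDerivAt_id s).const_mul (-(2 * (ε * M)))
          simpa [mul_comm] using h0.exp
        have hd : HasDerivAt (fun s => Real.exp (-(2 * (ε * M)) * s) * g s ^ 2)
            (-(2 * (ε * M)) * Real.exp (-(2 * (ε * M)) * s) * g s ^ 2
              + Real.exp (-(2 * (ε * M)) * s) * (2 * g s * (ε * U₂ s ε * g s))) s := by
          have h : HasDerivAt (fun s => Real.exp (-(2 * (ε * M)) * s) * g s ^ 2) _ s :=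
            he.mul ((hgd s hs').pow 2)
          convert h using 1
          push_cast
          ring
        rw [hd.deriv]
        have hU := hU₂ ε hε0 s hs'
        have h1 : U₂ s ε ≤ M := (abs_le.mp hU).2
        nlinarith [mul_nonneg (mul_nonneg (mul_nonneg
          (by positivity : (0:ℝ) ≤ 2 * ε) (Real.exp_pos (-(2 * (ε * M)) * s)).le)
          (sq_nonneg (g s))) (by linarith : (0:ℝ) ≤ M - U₂ s ε)]
    intro s hs
    rcases le_total t₀ s with hts | hts
    · have h1 := hqanti ht₀ hs hts
      have h2 : Real.exp (2 * (ε * M) * s) * (Real.exp (-(2 * (ε * M)) * s) * g s ^ 2)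
          ≤ Real.exp (2 * (ε * M) * s) * (Real.exp (-(2 * (ε * M)) * t₀) * g t₀ ^ 2) :=
        mul_le_mul_of_nonneg_left h1 (Real.exp_pos _).le
      have h3 : Real.exp (2 * (ε * M) * s) * (Real.exp (-(2 * (ε * M)) * s) * g s ^ 2)
          = g s ^ 2 := by
        rw [← mul_assoc, ← Real.exp_add]
        have he : 2 * (ε * M) * s + -(2 * (ε * M)) * s = 0 := by ring
        rw [he, Real.exp_zero, one_mul]
      have h4 : Real.exp (2 * (ε * M) * s) * (Real.exp (-(2 * (ε * M)) * t₀) * g t₀ ^ 2)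
          = Real.exp (2 * (ε * M) * (s - t₀)) * g t₀ ^ 2 := by
        rw [← mul_assoc, ← Real.exp_add]
        have he : 2 * (ε * M) * s + -(2 * (ε * M)) * t₀ = 2 * (ε * M) * (s - t₀) := by ring
        rw [he]
      rw [h3, h4] at h2
      have h5 : Real.exp (2 * (ε * M) * (s - t₀)) ≤ Real.exp (2 * (ε * M) * (b - a)) := by
        apply Real.exp_le_exp.mpr
        have h6 : s - t₀ ≤ b - a := by
          have := hs.2; have := ht₀.1; linarith
        nlinarith
      exact h2.trans (mul_le_mul_of_nonneg_right h5 (sq_nonneg _))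
    · have h1 := hpmono hs ht₀ hts
      have h2 : Real.exp (-(2 * (ε * M)) * s) * (Real.exp (2 * (ε * M) * s) * g s ^ 2)
          ≤ Real.exp (-(2 * (ε * M)) * s) * (Real.exp (2 * (ε * M) * t₀) * g t₀ ^ 2) :=
        mul_le_mul_of_nonneg_left h1 (Real.exp_pos _).le
      have h3 : Real.exp (-(2 * (ε * M)) * s) * (Real.exp (2 * (ε * M) * s) * g s ^ 2)
          = g s ^ 2 := by
        rw [← mul_assoc, ← Real.exp_add]
        have he : -(2 * (ε * M)) * s + 2 * (ε * M) * s = 0 := by ring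
        rw [he, Real.exp_zero, one_mul]
      have h4 : Real.exp (-(2 * (ε * M)) * s) * (Real.exp (2 * (ε * M) * t₀) * g t₀ ^ 2)
          = Real.exp (2 * (ε * M) * (t₀ - s)) * g t₀ ^ 2 := by
        rw [← mul_assoc, ← Real.exp_add]
        have he : -(2 * (ε * M)) * s + 2 * (ε * M) * t₀ = 2 * (ε * M) * (t₀ - s) := by ring
        rw [he]
      rw [h3, h4] at h2
      have h5 : Real.exp (2 * (ε * M) * (t₀ - s)) ≤ Real.exp (2 * (ε * M) * (b - a)) := by
        apply Real.exp_le_exp.mpr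
        have h6 : t₀ - s ≤ b - a := by
          have := hs.1; have := ht₀.2; linarith
        nlinarith
      exact h2.trans (mul_le_mul_of_nonneg_right h5 (sq_nonneg _))
  -- |g s| ≤ E |g t₀|
  set E : ℝ := Real.exp (ε * M * (b - a)) with hE
  have habs : ∀ s ∈ Set.Icc a b, |g s| ≤ E * |g t₀| := by
    intro s hs
    have h1 := key s hs
    have h2 : Real.exp (2 * (ε * M) * (b - a)) = E ^ 2 := by
      rw [hE, ← Real.exp_nat_mul]
      ring_nf
    rw [h2] at h1
    have h3 := Real.sqrt_le_sqrt h1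
    rwa [Real.sqrt_sq_eq_abs,
      show E ^ 2 * g t₀ ^ 2 = (E * |g t₀|) ^ 2 by rw [mul_pow, sq_abs],
      Real.sqrt_sq (by positivity)] at h3
  -- ψ t₀ = 0 and g t₀ = x t₀
  have hψt₀ : ψ t₀ = 0 := by
    rw [hψ]; simp [intervalIntegral.integral_same]
  have hgt₀ : g t₀ = x t₀ := by rw [hg]; simp [hψt₀]
  -- FTC step: g t - g t₀ = ∫ deriv g
  have huIcc : Set.uIcc t₀ t ⊆ Set.Icc a b := Set.uIcc_subset_Icc ht₀ ht
  have hderiv_g : ∀ s ∈ Set.uIcc t₀ t, HasDerivAt g (deriv g s) s := by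
    intro s hs
    have h := hgd s (huIcc hs)
    rwa [h.deriv]
  have hbound : ∀ s ∈ Set.uIcc t₀ t, |deriv g s| ≤ ε * M * (E * |g t₀|) := by
    intro s hs
    have hs' := huIcc hs
    rw [(hgd s hs').deriv]
    rw [abs_mul, abs_mul, abs_of_pos hε0]
    have h1 := hU₂ ε hε0 s hs'
    have h2 := habs s hs'
    have h3 : |U₂ s ε| * |g s| ≤ M * (E * |g t₀|) :=
      mul_le_mul h1 h2 (abs_nonneg _) hM
    calc ε * |U₂ s ε| * |g s| = ε * (|U₂ s ε| * |g s|) := by ring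
      _ ≤ ε * (M * (E * |g t₀|)) := by
        apply mul_le_mul_of_nonneg_left h3 hε0.le
      _ = ε * M * (E * |g t₀|) := by ring
  have hint : IntervalIntegrable (deriv g) MeasureTheory.volume t₀ t := by
    apply IntervalIntegrable.mono_fun' (g := fun _ => ε * M * (E * |g t₀|))
      (intervalIntegrable_const)
    · exact (measurable_deriv g).aestronglyMeasurable.restrict
    · apply (MeasureTheory.ae_restrict_iff' measurableSet_uIoc).mpr
      apply MeasureTheory.ae_of_all
      intro s hs
      exact hbound s (Set.uIoc_subset_uIcc hs)
  have hftc : ∫ s in t₀..t, deriv g s = g t - g t₀ :=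
    intervalIntegral.integral_eq_sub_of_hasDerivAt hderiv_g hint
  have hdiff : |g t - g t₀| ≤ ε * M * (E * |g t₀|) * (b - a) := by
    rw [← hftc]
    have h1 := intervalIntegral.norm_integral_le_of_norm_le_const
      (C := ε * M * (E * |g t₀|)) (f := deriv g) (a := t₀) (b := t)
      (fun s hs => hbound s (Set.uIoc_subset_uIcc hs))
    have h2 : |t - t₀| ≤ b - a := by
      have h1 := ht.1; have h2 := ht.2; have h3 := ht₀.1; have h4 := ht₀.2
      rw [abs_sub_le_iff]
      constructor <;> linarith
    calc |∫ s in t₀..t, deriv g s| ≤ ε * M * (E * |g t₀|) * |t - t₀| := h1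
      _ ≤ ε * M * (E * |g t₀|) * (b - a) := by
        apply mul_le_mul_of_nonneg_left h2
        positivity
  -- express the target exponential via ψ
  have hφ : (μ t₀ / μ t) ^ ((1:ℝ)/4)
      * Real.exp (ε⁻¹ * ∫ s in t₀..t, Real.sqrt (-μ s)) = Real.exp (ψ t) := by
    have h1 : (0:ℝ) < μ t₀ / μ t := by
      have h2 := hμneg t₀ ht₀
      have h3 := hμneg t ht
      have : μ t₀ / μ t = (-μ t₀) / (-μ t) := by ring
      rw [this]
      positivity
    rw [Real.rpow_def_of_pos h1, ← Real.exp_add]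
    congr 1
    have h2 : Real.log (μ t₀ / μ t) = Real.log (-μ t₀) - Real.log (-μ t) := by
      have : μ t₀ / μ t = (-μ t₀) / (-μ t) := by ring
      rw [this, Real.log_div (by have := hμneg t₀ ht₀; linarith)
        (by have := hμneg t ht; linarith)]
    rw [hψ, h2]
    ring
  -- conclude
  by_cases hx0 : x t₀ = 0
  · refine ⟨0, by rw [abs_zero]; positivity, ?_⟩
    have hgt0 : g t₀ = 0 := by rw [hgt₀, hx0]
    have h1 := key t ht
    rw [hgt0] at h1
    have h2 : g t = 0 := by nlinarith [sq_nonneg (g t)]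
    have h3 : x t = 0 := by
      have : g t = x t * Real.exp (-ψ t) := by rw [hg]
      rw [h2] at this
      have := this.symm
      rcases mul_eq_zero.mp this with h | h
      · exact h
      · exact absurd h (Real.exp_ne_zero _)
    rw [h3, hx0]
    ring
  · refine ⟨g t / g t₀ - 1, ?_, ?_⟩
    · have hgne : g t₀ ≠ 0 := by rw [hgt₀]; exact hx0
      have h1 : |g t / g t₀ - 1| = |g t - g t₀| / |g t₀| := by
        rw [← abs_div]
        congr 1
        field_simp
      rw [h1, div_le_iff₀ (abs_pos.mpr hgne)]
      have hE1 : E ≤ Real.exp (M * (b - a)) := by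
        rw [hE]
        apply Real.exp_le_exp.mpr
        nlinarith [mul_nonneg (by linarith : (0:ℝ) ≤ 1 - ε) (mul_nonneg hM hba)]
      calc |g t - g t₀| ≤ ε * M * (E * |g t₀|) * (b - a) := hdiff
        _ ≤ ε * M * (Real.exp (M * (b - a)) * |g t₀|) * (b - a) := by
          apply mul_le_mul_of_nonneg_right _ hba
          apply mul_le_mul_of_nonneg_left _ (by positivity)
          exact mul_le_mul_of_nonneg_right hE1 (abs_nonneg _)
        _ = M * (b - a) * Real.exp (M * (b - a)) * ε * |g t₀| := by ring
        _ ≤ (M * (b - a) * Real.exp (M * (b - a)) + 1) * ε * |g t₀| := by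
          apply mul_le_mul_of_nonneg_right _ (abs_nonneg _)
          apply mul_le_mul_of_nonneg_right _ hε0.le
          linarith
    · rw [hφ]
      have hgne : g t₀ ≠ 0 := by rw [hgt₀]; exact hx0
      have hxt : x t = Real.exp (ψ t) * g t := by
        rw [hg]
        simp only []
        rw [mul_comm (x t) (Real.exp (-ψ t)), ← mul_assoc, ← Real.exp_add]
        simp
      rw [hxt, hgt₀.symm]
      field_simp
      ring
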